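/- Let γ : Z_n → ℕ and i ∈ {1,…,n}, and let −^a +^b be the reduced i-signature of γ. Then the reduced i-signature of γ^{i,+} has exactly a + 1 symbols '−'; and if a > 0, the reduced i-signature of γ^{i,−} has exactly a − 1 symbols '−'. (That is, the combinatorial operators f̃_i and ẽ_i change ε_i by +1 and −1 respectively.) -/

import Mathlib

/-!
STATEMENT 17: For γ : Z_n → ℕ and i ∈ {1,…,n}, with reduced i-signature
−^a +^b: the reduced i-signature of γ^{i,+} has exactly a + 1 symbols "−",
and if a > 0, the reduced i-signature of γ^{i,−} has exactly a − 1 symbols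
"−".  (The combinatorial operators f̃_i and ẽ_i change ε_i by +1 and −1.
Functions on Z_n = {(k,l) : 1 ≤ k ≤ l ≤ n} are encoded as functions
γ : ℤ × ℤ → ℕ supported on Z_n.)
-/


/-- The two-letter alphabet {+,−}. -/
inductive Sign : Type
  | plus : Sign
  | minus : Sign
deriving DecidableEq

/-- Repeatedly delete adjacent pairs "+−" until none remain, producing the
reduced word −^a +^b (processing the word from the right). -/
def sigReduce : List Sign → List Sign
  | [] => []
  | s :: w =>
    let t := sigReduce w
    if s = Sign.plus ∧ t.head? = some Sign.minus then t.tail else s :: t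

/-- The block of the i-signature word contributed by the pairs (k,i) and
(k,i−1): γ(k,i) symbols '−' followed by γ(k,i−1) symbols '+'. -/
def sigBlock (γ : ℤ × ℤ → ℕ) (i k : ℤ) : List Sign :=
  List.replicate (γ (k, i)) Sign.minus ++ List.replicate (γ (k, i - 1)) Sign.plus

/-- The i-signature word w_i(γ): the blocks for k = 1, …, i listed in
increasing order of k. -/
def sigWord (γ : ℤ × ℤ → ℕ) (i : ℤ) : List Sign :=
  ((List.range i.toNat).map fun j => sigBlock γ i (1 + j)).flatten

/-- The part of the i-signature word consisting of the blocks k, k+1, …, i. -/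
def sigSuffix (γ : ℤ × ℤ → ℕ) (i k : ℤ) : List Sign :=
  ((List.range (i + 1 - k).toNat).map fun j => sigBlock γ i (k + j)).flatten

/-- The part of the i-signature word consisting of the blocks 1, …, k−1. -/
def sigPrefix (γ : ℤ × ℤ → ℕ) (i k : ℤ) : List Sign :=
  ((List.range (k - 1).toNat).map fun j => sigBlock γ i (1 + j)).flatten

/-- The number a of '−'s in the reduced i-signature −^a +^b of γ. -/
def aCount (γ : ℤ × ℤ → ℕ) (i : ℤ) : ℕ :=
  (sigReduce (sigWord γ i)).count Sign.minus

/-- The number b of '+'s in the reduced i-signature −^a +^b of γ. -/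
def bCount (γ : ℤ × ℤ → ℕ) (i : ℤ) : ℕ :=
  (sigReduce (sigWord γ i)).count Sign.plus

/-- The index k' such that the pair (k', i−1) contributes the leftmost
surviving '+' of the reduced i-signature of γ: a '+' from the block k survives
the cancellation precisely when γ(k,i−1) exceeds the number of '−'s in the
reduced word of the blocks k+1, …, i.  If there is no '+' in the reduced
i-signature, then k' = i. -/
noncomputable def kPlus (γ : ℤ × ℤ → ℕ) (i : ℤ) : ℤ :=
  let S := (Finset.Icc (1 : ℤ) (i - 1)).filter fun k =>
    (sigReduce (sigSuffix γ i (k + 1))).count Sign.minus < γ (k, i - 1)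
  if h : S.Nonempty then S.min' h else i

/-- The index k'' such that the pair (k'', i) contributes the rightmost
surviving '−' of the reduced i-signature of γ: a '−' from the block k survives
the cancellation precisely when γ(k,i) exceeds the number of '+'s in the
reduced word of the blocks 1, …, k−1.  (Meaningful when a > 0; otherwise the
value defaults to i.) -/
noncomputable def kMinus (γ : ℤ × ℤ → ℕ) (i : ℤ) : ℤ :=
  let S := (Finset.Icc (1 : ℤ) i).filter fun k =>
    (sigReduce (sigPrefix γ i k)).count Sign.plus < γ (k, i)
  if h : S.Nonempty then S.max' h else i

/-- The operator γ ↦ γ^{i,+}: add 1 at (k',i) and subtract 1 at (k',i−1),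
where (k',i−1) is the pair contributing the leftmost surviving '+' of the
reduced i-signature; if there is no such '+' then k' = i and only γ(i,i) is
increased by 1. -/
noncomputable def gammaPlus (γ : ℤ × ℤ → ℕ) (i : ℤ) : ℤ × ℤ → ℕ := fun p =>
  if p = (kPlus γ i, i) then γ p + 1
  else if kPlus γ i < i ∧ p = (kPlus γ i, i - 1) then γ p - 1
  else γ p

/-- The operator γ ↦ γ^{i,−} (defined when a > 0): subtract 1 at (k'',i) and
add 1 at (k'',i−1), where (k'',i) is the pair contributing the rightmost
surviving '−' of the reduced i-signature; if k'' = i then only γ(i,i) is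
decreased by 1. -/
noncomputable def gammaMinus (γ : ℤ × ℤ → ℕ) (i : ℤ) : ℤ × ℤ → ℕ := fun p =>
  if p = (kMinus γ i, i) then γ p - 1
  else if kMinus γ i < i ∧ p = (kMinus γ i, i - 1) then γ p + 1
  else γ p


/-! ### Auxiliary development -/

/-- The pair (number of unmatched '−', number of unmatched '+') of a word. -/
def ab : List Sign → ℕ × ℕ
  | [] => (0, 0)
  | Sign.minus :: w => ((ab w).1 + 1, (ab w).2)
  | Sign.plus :: w =>
    if 0 < (ab w).1 then ((ab w).1 - 1, (ab w).2) else ((ab w).1, (ab w).2 + 1)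

lemma ab_shape (w : List Sign) :
    sigReduce w = List.replicate (ab w).1 Sign.minus ++ List.replicate (ab w).2 Sign.plus := by
  induction w with
  | nil => rfl
  | cons s w ih =>
    cases s with
    | minus =>
      simp only [sigReduce, ih]
      rw [if_neg (by rintro ⟨h, -⟩; exact absurd h (by decide))]
      simp [ab, List.replicate_succ]
    | plus =>
      simp only [sigReduce, ih, ab]
      rcases Nat.eq_zero_or_pos (ab w).1 with h | h
      · rw [if_neg, if_neg (by omega)]
        · simp [h, List.replicate_succ]
        · rw [h]
          rintro ⟨-, h2⟩
          simp only [List.replicate_zero, List.nil_append] at h2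
          cases hb : (ab w).2 with
          | zero => rw [hb] at h2; simp at h2
          | succ b => rw [hb] at h2; simp [List.replicate_succ] at h2
      · rw [if_pos, if_pos h]
        · obtain ⟨a, ha⟩ : ∃ a, (ab w).1 = a + 1 := ⟨(ab w).1 - 1, by omega⟩
          rw [ha]; simp [List.replicate_succ]
        · obtain ⟨a, ha⟩ : ∃ a, (ab w).1 = a + 1 := ⟨(ab w).1 - 1, by omega⟩
          rw [ha]; simp [List.replicate_succ]

lemma count_minus_reduce (w : List Sign) :
    (sigReduce w).count Sign.minus = (ab w).1 := by
  rw [ab_shape]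
  simp [List.count_append, List.count_replicate]

lemma count_plus_reduce (w : List Sign) :
    (sigReduce w).count Sign.plus = (ab w).2 := by
  rw [ab_shape]
  simp [List.count_append, List.count_replicate]

lemma ab_append (u v : List Sign) :
    ab (u ++ v) = ((ab u).1 + ((ab v).1 - (ab u).2), (ab v).2 + ((ab u).2 - (ab v).1)) := by
  induction u with
  | nil => simp [ab]
  | cons s u ih =>
    cases s with
    | minus =>
      simp only [List.cons_append, ab, List.append_eq, ih]
      exact Prod.ext (by omega) (by omega)
    | plus =>
      simp only [List.cons_append, ab, List.append_eq, ih]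
      split_ifs <;> (dsimp only; simp only [Prod.mk.injEq, and_true]; omega)

lemma ab_replicate_minus (n : ℕ) : ab (List.replicate n Sign.minus) = (n, 0) := by
  induction n with
  | zero => rfl
  | succ n ih => simp [List.replicate_succ, ab, ih]

lemma ab_replicate_plus (n : ℕ) : ab (List.replicate n Sign.plus) = (0, n) := by
  induction n with
  | zero => rfl
  | succ n ih => simp [List.replicate_succ, ab, ih]

lemma ab_block (γ : ℤ × ℤ → ℕ) (i k : ℤ) :
    ab (sigBlock γ i k) = (γ (k, i), γ (k, i - 1)) := by
  rw [sigBlock, ab_append, ab_replicate_minus, ab_replicate_plus]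
  simp

lemma castMap {α : Type} (n : ℕ) (f : ℤ → α) :
    (List.map f (do let a ← List.range n; pure ((a : ℤ)))) =
      List.map (fun j : ℕ => f j) (List.range n) := by
  show List.map f ((List.range n).flatMap (pure ∘ fun a : ℕ => (a : ℤ))) = _
  rw [List.flatMap_pure_eq_map, List.map_map]
  rfl

lemma sigSuffix_def' (γ : ℤ × ℤ → ℕ) (i k : ℤ) :
    sigSuffix γ i k =
      ((List.range (i + 1 - k).toNat).map fun j : ℕ => sigBlock γ i (k + j)).flatten := by
  unfold sigSuffix
  rw [castMap]

lemma sigPrefix_def' (γ : ℤ × ℤ → ℕ) (i k : ℤ) :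
    sigPrefix γ i k =
      ((List.range (k - 1).toNat).map fun j : ℕ => sigBlock γ i (1 + j)).flatten := by
  unfold sigPrefix
  rw [castMap]

lemma sigWord_def' (γ : ℤ × ℤ → ℕ) (i : ℤ) :
    sigWord γ i =
      ((List.range i.toNat).map fun j : ℕ => sigBlock γ i (1 + j)).flatten := by
  unfold sigWord
  rw [castMap]

lemma sigSuffix_succ (γ : ℤ × ℤ → ℕ) (i k : ℤ) (h : k ≤ i) :
    sigSuffix γ i k = sigBlock γ i k ++ sigSuffix γ i (k + 1) := by
  rw [sigSuffix_def', sigSuffix_def']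
  have h1 : (i + 1 - k).toNat = (i + 1 - (k + 1)).toNat + 1 := by omega
  rw [h1, List.range_succ_eq_map, List.map_cons, List.map_map, List.flatten_cons]
  congr 1
  · norm_num
  · congr 1
    apply List.map_congr_left
    intro j _
    simp only [Function.comp_apply]
    congr 1
    push_cast
    ring

lemma sigSuffix_empty (γ : ℤ × ℤ → ℕ) (i k : ℤ) (h : i < k) :
    sigSuffix γ i k = [] := by
  rw [sigSuffix_def']
  have h1 : (i + 1 - k).toNat = 0 := by omega
  rw [h1]
  rfl

lemma sigPrefix_succ (γ : ℤ × ℤ → ℕ) (i k : ℤ) (h : 1 ≤ k) :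
    sigPrefix γ i (k + 1) = sigPrefix γ i k ++ sigBlock γ i k := by
  rw [sigPrefix_def', sigPrefix_def']
  have h1 : (k + 1 - 1).toNat = (k - 1).toNat + 1 := by omega
  rw [h1, List.range_succ, List.map_append, List.flatten_append]
  congr 1
  simp only [List.map_cons, List.map_nil, List.flatten_cons, List.flatten_nil,
    List.append_nil]
  congr 1
  omega

lemma sigPrefix_one (γ : ℤ × ℤ → ℕ) (i : ℤ) : sigPrefix γ i 1 = [] := by
  rw [sigPrefix_def']
  norm_num

lemma sigWord_eq_suffix (γ : ℤ × ℤ → ℕ) (i : ℤ) : sigWord γ i = sigSuffix γ i 1 := by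
  rw [sigWord_def', sigSuffix_def']
  norm_num

lemma sigWord_eq_prefix (γ : ℤ × ℤ → ℕ) (i : ℤ) : sigWord γ i = sigPrefix γ i (i + 1) := by
  rw [sigWord_def', sigPrefix_def']
  norm_num

lemma sigBlock_congr (γ γ' : ℤ × ℤ → ℕ) (i l : ℤ)
    (h1 : γ' (l, i) = γ (l, i)) (h2 : γ' (l, i - 1) = γ (l, i - 1)) :
    sigBlock γ' i l = sigBlock γ i l := by
  simp [sigBlock, h1, h2]

lemma sigSuffix_congr (γ γ' : ℤ × ℤ → ℕ) (i k : ℤ)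
    (h : ∀ l, k ≤ l → l ≤ i → sigBlock γ' i l = sigBlock γ i l) :
    sigSuffix γ' i k = sigSuffix γ i k := by
  rw [sigSuffix_def', sigSuffix_def']
  congr 1
  apply List.map_congr_left
  intro j hj
  rw [List.mem_range] at hj
  exact h _ (by omega) (by omega)

lemma sigPrefix_congr (γ γ' : ℤ × ℤ → ℕ) (i k : ℤ)
    (h : ∀ l, 1 ≤ l → l ≤ k - 1 → sigBlock γ' i l = sigBlock γ i l) :
    sigPrefix γ' i k = sigPrefix γ i k := by
  rw [sigPrefix_def', sigPrefix_def']
  congr 1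
  apply List.map_congr_left
  intro j hj
  rw [List.mem_range] at hj
  exact h _ (by omega) (by omega)

lemma plus_case1 (γ γ' : ℤ × ℤ → ℕ) (i k' : ℤ)
    (hk1 : 1 ≤ k') (hk2 : k' ≤ i - 1)
    (hblocks : ∀ l, l ≠ k' → sigBlock γ' i l = sigBlock γ i l)
    (hm : γ' (k', i) = γ (k', i) + 1)
    (hp : γ' (k', i - 1) + 1 = γ (k', i - 1))
    (hlt : (ab (sigSuffix γ i (k' + 1))).1 < γ (k', i - 1))
    (hmin : ∀ l, 1 ≤ l → l < k' → γ (l, i - 1) ≤ (ab (sigSuffix γ i (l + 1))).1) :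
    ∀ t : ℕ, 1 ≤ k' - t →
      (ab (sigSuffix γ' i (k' - t))).1 = (ab (sigSuffix γ i (k' - t))).1 + 1 ∧
      (ab (sigSuffix γ i (k' - t))).2 = (ab (sigSuffix γ' i (k' - t))).2 + 1 := by
  intro t
  induction t with
  | zero =>
    intro _
    have hsuf : sigSuffix γ' i (k' + 1) = sigSuffix γ i (k' + 1) :=
      sigSuffix_congr _ _ _ _ (fun l hl _ => hblocks l (by omega))
    simp only [Nat.cast_zero, sub_zero]
    rw [sigSuffix_succ γ' i k' (by omega), sigSuffix_succ γ i k' (by omega), hsuf,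
      ab_append, ab_append, ab_block, ab_block, hm]
    constructor <;> (dsimp only; omega)
  | succ t ih =>
    intro h1
    have h2 : 1 ≤ k' - t := by push_cast at h1 ⊢; omega
    obtain ⟨iha, ihb⟩ := ih h2
    have e : k' - ((t + 1 : ℕ) : ℤ) + 1 = k' - t := by push_cast; ring
    have hkk : k' - ((t + 1 : ℕ) : ℤ) ≠ k' := by push_cast; omega
    have hle : k' - ((t + 1 : ℕ) : ℤ) ≤ i := by push_cast at h1 ⊢; omega
    rw [sigSuffix_succ γ' i _ hle, sigSuffix_succ γ i _ hle, e, hblocks _ hkk,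
      ab_append, ab_append, ab_block]
    have hmn := hmin (k' - ((t + 1 : ℕ) : ℤ)) (by push_cast at h1 ⊢; omega)
      (by push_cast; omega)
    rw [e] at hmn
    constructor <;> (dsimp only; omega)

lemma plus_case2 (γ γ' : ℤ × ℤ → ℕ) (i : ℤ) (hi : 1 ≤ i)
    (hblocks : ∀ l, l ≠ i → sigBlock γ' i l = sigBlock γ i l)
    (hm : γ' (i, i) = γ (i, i) + 1)
    (hp : γ' (i, i - 1) = γ (i, i - 1))
    (hmax : ∀ l, 1 ≤ l → l ≤ i - 1 → γ (l, i - 1) ≤ (ab (sigSuffix γ i (l + 1))).1) :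
    ∀ t : ℕ, 1 ≤ i - t →
      (ab (sigSuffix γ' i (i - t))).1 = (ab (sigSuffix γ i (i - t))).1 + 1 ∧
      (ab (sigSuffix γ' i (i - t))).2 = (ab (sigSuffix γ i (i - t))).2 := by
  intro t
  induction t with
  | zero =>
    intro _
    simp only [Nat.cast_zero, sub_zero]
    rw [sigSuffix_succ γ' i i le_rfl, sigSuffix_succ γ i i le_rfl,
      sigSuffix_empty γ' i (i + 1) (by omega), sigSuffix_empty γ i (i + 1) (by omega),
      ab_append, ab_append, ab_block, ab_block, hm, hp]
    constructor <;> simp only [ab] <;> omega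
  | succ t ih =>
    intro h1
    have h2 : 1 ≤ i - t := by push_cast at h1 ⊢; omega
    obtain ⟨iha, ihb⟩ := ih h2
    have e : i - ((t + 1 : ℕ) : ℤ) + 1 = i - t := by push_cast; ring
    have hkk : i - ((t + 1 : ℕ) : ℤ) ≠ i := by push_cast; omega
    have hle : i - ((t + 1 : ℕ) : ℤ) ≤ i := by push_cast; omega
    rw [sigSuffix_succ γ' i _ hle, sigSuffix_succ γ i _ hle, e, hblocks _ hkk,
      ab_append, ab_append, ab_block]
    have hmn := hmax (i - ((t + 1 : ℕ) : ℤ)) (by push_cast at h1 ⊢; omega)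
      (by push_cast; omega)
    rw [e] at hmn
    constructor <;> (dsimp only; omega)

lemma minus_zero (γ : ℤ × ℤ → ℕ) (i : ℤ)
    (hall : ∀ l, 1 ≤ l → l ≤ i → γ (l, i) ≤ (ab (sigPrefix γ i l)).2) :
    ∀ t : ℕ, (t : ℤ) ≤ i → (ab (sigPrefix γ i (1 + t))).1 = 0 := by
  intro t
  induction t with
  | zero =>
    intro _
    norm_num [sigPrefix_one, ab]
  | succ t ih =>
    intro h1
    have h2 : (t : ℤ) ≤ i := by push_cast at h1 ⊢; omega
    have iha := ih h2
    have e : (1 : ℤ) + ((t + 1 : ℕ) : ℤ) = (1 + (t : ℤ)) + 1 := by push_cast; ring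
    rw [e, sigPrefix_succ γ i _ (by omega), ab_append, ab_block]
    have hmn := hall (1 + (t : ℤ)) (by omega) (by push_cast at h1; omega)
    dsimp only
    omega

lemma minus_main (γ γ' : ℤ × ℤ → ℕ) (i k'' : ℤ)
    (hk1 : 1 ≤ k'') (hk2 : k'' ≤ i - 1)
    (hblocks : ∀ l, l ≠ k'' → sigBlock γ' i l = sigBlock γ i l)
    (hm : γ' (k'', i) + 1 = γ (k'', i))
    (hp : γ' (k'', i - 1) = γ (k'', i - 1) + 1)
    (hlt : (ab (sigPrefix γ i k'')).2 < γ (k'', i))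
    (hmax : ∀ l, k'' < l → l ≤ i → γ (l, i) ≤ (ab (sigPrefix γ i l)).2) :
    ∀ t : ℕ, k'' + 1 + t ≤ i + 1 →
      (ab (sigPrefix γ' i (k'' + 1 + t))).1 + 1 = (ab (sigPrefix γ i (k'' + 1 + t))).1 ∧
      (ab (sigPrefix γ' i (k'' + 1 + t))).2 = (ab (sigPrefix γ i (k'' + 1 + t))).2 + 1 := by
  intro t
  induction t with
  | zero =>
    intro _
    have hpre : sigPrefix γ' i k'' = sigPrefix γ i k'' :=
      sigPrefix_congr _ _ _ _ (fun l _ hl => hblocks l (by omega))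
    simp only [Nat.cast_zero, add_zero]
    rw [sigPrefix_succ γ' i k'' (by omega), sigPrefix_succ γ i k'' (by omega), hpre,
      ab_append, ab_append, ab_block, ab_block, hp]
    constructor <;> (dsimp only; omega)
  | succ t ih =>
    intro h1
    have h2 : k'' + 1 + t ≤ i + 1 := by push_cast at h1 ⊢; omega
    obtain ⟨iha, ihb⟩ := ih h2
    have e : k'' + 1 + ((t + 1 : ℕ) : ℤ) = (k'' + 1 + t) + 1 := by push_cast; ring
    have hkk : k'' + 1 + (t : ℤ) ≠ k'' := by omega
    rw [e, sigPrefix_succ γ' i _ (by omega), sigPrefix_succ γ i _ (by omega),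
      hblocks _ hkk, ab_append, ab_append, ab_block]
    have hmn := hmax (k'' + 1 + (t : ℤ)) (by omega) (by push_cast at h1; omega)
    constructor <;> (dsimp only; omega)

lemma aCount_suffix (γ : ℤ × ℤ → ℕ) (i : ℤ) :
    aCount γ i = (ab (sigSuffix γ i 1)).1 := by
  rw [aCount, count_minus_reduce, sigWord_eq_suffix]

lemma aCount_prefix (γ : ℤ × ℤ → ℕ) (i : ℤ) :
    aCount γ i = (ab (sigPrefix γ i (i + 1))).1 := by
  rw [aCount, count_minus_reduce, sigWord_eq_prefix]

lemma kPlus_cases (γ : ℤ × ℤ → ℕ) (i : ℤ) :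
    (1 ≤ kPlus γ i ∧ kPlus γ i ≤ i - 1 ∧
      (ab (sigSuffix γ i (kPlus γ i + 1))).1 < γ (kPlus γ i, i - 1) ∧
      ∀ l, 1 ≤ l → l < kPlus γ i → γ (l, i - 1) ≤ (ab (sigSuffix γ i (l + 1))).1)
    ∨ (kPlus γ i = i ∧
      ∀ l, 1 ≤ l → l ≤ i - 1 → γ (l, i - 1) ≤ (ab (sigSuffix γ i (l + 1))).1) := by
  unfold kPlus
  dsimp only
  split_ifs with h
  · left
    have hmem := Finset.min'_mem _ h
    rw [Finset.mem_filter, Finset.mem_Icc, count_minus_reduce] at hmem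
    refine ⟨hmem.1.1, hmem.1.2, hmem.2, ?_⟩
    intro l hl1 hl2
    by_contra hc
    push_neg at hc
    have hmem2 : l ∈ (Finset.Icc (1 : ℤ) (i - 1)).filter fun k =>
        (sigReduce (sigSuffix γ i (k + 1))).count Sign.minus < γ (k, i - 1) := by
      rw [Finset.mem_filter, Finset.mem_Icc, count_minus_reduce]
      exact ⟨⟨hl1, by omega⟩, hc⟩
    have := Finset.min'_le _ _ hmem2
    omega
  · right
    refine ⟨rfl, ?_⟩
    intro l hl1 hl2
    by_contra hc
    push_neg at hc
    exact h ⟨l, by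
      rw [Finset.mem_filter, Finset.mem_Icc, count_minus_reduce]
      exact ⟨⟨hl1, hl2⟩, hc⟩⟩

lemma kMinus_cases (γ : ℤ × ℤ → ℕ) (i : ℤ) :
    (1 ≤ kMinus γ i ∧ kMinus γ i ≤ i ∧
      (ab (sigPrefix γ i (kMinus γ i))).2 < γ (kMinus γ i, i) ∧
      ∀ l, kMinus γ i < l → l ≤ i → γ (l, i) ≤ (ab (sigPrefix γ i l)).2)
    ∨ (∀ l, 1 ≤ l → l ≤ i → γ (l, i) ≤ (ab (sigPrefix γ i l)).2) := by
  unfold kMinus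
  dsimp only
  split_ifs with h
  · left
    have hmem := Finset.max'_mem _ h
    rw [Finset.mem_filter, Finset.mem_Icc, count_plus_reduce] at hmem
    refine ⟨hmem.1.1, hmem.1.2, hmem.2, ?_⟩
    intro l hl1 hl2
    by_contra hc
    push_neg at hc
    have hmem2 : l ∈ (Finset.Icc (1 : ℤ) i).filter fun k =>
        (sigReduce (sigPrefix γ i k)).count Sign.plus < γ (k, i) := by
      rw [Finset.mem_filter, Finset.mem_Icc, count_plus_reduce]
      exact ⟨⟨by omega, hl2⟩, hc⟩
    have := Finset.le_max' _ _ hmem2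
    omega
  · right
    intro l hl1 hl2
    by_contra hc
    push_neg at hc
    exact h ⟨l, by
      rw [Finset.mem_filter, Finset.mem_Icc, count_plus_reduce]
      exact ⟨⟨hl1, hl2⟩, hc⟩⟩

lemma gammaPlus_at_m' (γ : ℤ × ℤ → ℕ) (i l : ℤ) (hl : l ≠ kPlus γ i) :
    gammaPlus γ i (l, i) = γ (l, i) := by
  unfold gammaPlus
  rw [if_neg, if_neg]
  · rintro ⟨-, h⟩
    rw [Prod.mk.injEq] at h
    omega
  · intro h
    rw [Prod.mk.injEq] at h
    exact hl h.1

lemma gammaPlus_at_p' (γ : ℤ × ℤ → ℕ) (i l : ℤ) (hl : l ≠ kPlus γ i) :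
    gammaPlus γ i (l, i - 1) = γ (l, i - 1) := by
  unfold gammaPlus
  rw [if_neg, if_neg]
  · rintro ⟨-, h⟩
    rw [Prod.mk.injEq] at h
    exact hl h.1
  · intro h
    rw [Prod.mk.injEq] at h
    omega

lemma gammaPlus_blocks (γ : ℤ × ℤ → ℕ) (i l : ℤ) (hl : l ≠ kPlus γ i) :
    sigBlock (gammaPlus γ i) i l = sigBlock γ i l :=
  sigBlock_congr _ _ _ _ (gammaPlus_at_m' γ i l hl) (gammaPlus_at_p' γ i l hl)

lemma gammaPlus_m (γ : ℤ × ℤ → ℕ) (i : ℤ) :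
    gammaPlus γ i (kPlus γ i, i) = γ (kPlus γ i, i) + 1 := by
  unfold gammaPlus
  rw [if_pos rfl]

lemma gammaPlus_p (γ : ℤ × ℤ → ℕ) (i : ℤ) (h : kPlus γ i < i) :
    gammaPlus γ i (kPlus γ i, i - 1) = γ (kPlus γ i, i - 1) - 1 := by
  unfold gammaPlus
  rw [if_neg, if_pos ⟨h, rfl⟩]
  intro hc
  rw [Prod.mk.injEq] at hc
  omega

lemma gammaPlus_p2 (γ : ℤ × ℤ → ℕ) (i : ℤ) (h : ¬ kPlus γ i < i) :
    gammaPlus γ i (kPlus γ i, i - 1) = γ (kPlus γ i, i - 1) := by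
  unfold gammaPlus
  rw [if_neg, if_neg]
  · rintro ⟨hc, -⟩
    exact h hc
  · intro hc
    rw [Prod.mk.injEq] at hc
    omega

lemma gammaMinus_at_m' (γ : ℤ × ℤ → ℕ) (i l : ℤ) (hl : l ≠ kMinus γ i) :
    gammaMinus γ i (l, i) = γ (l, i) := by
  unfold gammaMinus
  rw [if_neg, if_neg]
  · rintro ⟨-, h⟩
    rw [Prod.mk.injEq] at h
    omega
  · intro h
    rw [Prod.mk.injEq] at h
    exact hl h.1

lemma gammaMinus_at_p' (γ : ℤ × ℤ → ℕ) (i l : ℤ) (hl : l ≠ kMinus γ i) :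
    gammaMinus γ i (l, i - 1) = γ (l, i - 1) := by
  unfold gammaMinus
  rw [if_neg, if_neg]
  · rintro ⟨-, h⟩
    rw [Prod.mk.injEq] at h
    exact hl h.1
  · intro h
    rw [Prod.mk.injEq] at h
    omega

lemma gammaMinus_blocks (γ : ℤ × ℤ → ℕ) (i l : ℤ) (hl : l ≠ kMinus γ i) :
    sigBlock (gammaMinus γ i) i l = sigBlock γ i l :=
  sigBlock_congr _ _ _ _ (gammaMinus_at_m' γ i l hl) (gammaMinus_at_p' γ i l hl)

lemma gammaMinus_m (γ : ℤ × ℤ → ℕ) (i : ℤ) :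
    gammaMinus γ i (kMinus γ i, i) = γ (kMinus γ i, i) - 1 := by
  unfold gammaMinus
  rw [if_pos rfl]

lemma gammaMinus_p (γ : ℤ × ℤ → ℕ) (i : ℤ) (h : kMinus γ i < i) :
    gammaMinus γ i (kMinus γ i, i - 1) = γ (kMinus γ i, i - 1) + 1 := by
  unfold gammaMinus
  rw [if_neg, if_pos ⟨h, rfl⟩]
  intro hc
  rw [Prod.mk.injEq] at hc
  omega

lemma gammaMinus_p2 (γ : ℤ × ℤ → ℕ) (i : ℤ) (h : ¬ kMinus γ i < i) :
    gammaMinus γ i (kMinus γ i, i - 1) = γ (kMinus γ i, i - 1) := by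
  unfold gammaMinus
  rw [if_neg, if_neg]
  · rintro ⟨hc, -⟩
    exact h hc
  · intro hc
    rw [Prod.mk.injEq] at hc
    omega

theorem stmt17 (n i : ℤ) (hn : 1 ≤ n) (hi1 : 1 ≤ i) (hin : i ≤ n)
    (γ : ℤ × ℤ → ℕ)
    (hsupp : ∀ p : ℤ × ℤ, γ p ≠ 0 → 1 ≤ p.1 ∧ p.1 ≤ p.2 ∧ p.2 ≤ n) :
    aCount (gammaPlus γ i) i = aCount γ i + 1 ∧
    (0 < aCount γ i → aCount (gammaMinus γ i) i = aCount γ i - 1) := by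
  constructor
  · rcases kPlus_cases γ i with ⟨h1, h2, h3, h4⟩ | ⟨h1, h2⟩
    · have hp : gammaPlus γ i (kPlus γ i, i - 1) + 1 = γ (kPlus γ i, i - 1) := by
        rw [gammaPlus_p γ i (by omega)]
        omega
      have key := plus_case1 γ (gammaPlus γ i) i (kPlus γ i) h1 h2
        (fun l hl => gammaPlus_blocks γ i l hl) (gammaPlus_m γ i) hp h3 h4
        (kPlus γ i - 1).toNat (by omega)
      have e1 : kPlus γ i - ((kPlus γ i - 1).toNat : ℤ) = 1 := by omega
      rw [e1] at key
      rw [aCount_suffix, aCount_suffix]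
      exact key.1
    · have hm := gammaPlus_m γ i
      have hp := gammaPlus_p2 γ i (by omega)
      rw [h1] at hm hp
      have key := plus_case2 γ (gammaPlus γ i) i hi1
        (fun l hl => gammaPlus_blocks γ i l (by rw [h1]; exact hl)) hm hp h2
        (i - 1).toNat (by omega)
      have e1 : i - ((i - 1).toNat : ℤ) = 1 := by omega
      rw [e1] at key
      rw [aCount_suffix, aCount_suffix]
      exact key.1
  · intro ha
    rcases kMinus_cases γ i with ⟨h1, h2, h3, h4⟩ | hall
    · rcases eq_or_lt_of_le h2 with heq | hlt2
      · have hm := gammaMinus_m γ i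
        have hp2 := gammaMinus_p2 γ i (by omega)
        rw [heq] at hm hp2 h3
        have hpre : sigPrefix (gammaMinus γ i) i i = sigPrefix γ i i :=
          sigPrefix_congr _ _ _ _ (fun l _ hl => gammaMinus_blocks γ i l (by omega))
        rw [aCount_prefix, aCount_prefix, sigPrefix_succ (gammaMinus γ i) i i hi1,
          sigPrefix_succ γ i i hi1, hpre, ab_append, ab_append, ab_block, ab_block,
          hm, hp2]
        dsimp only
        omega
      · have hm : gammaMinus γ i (kMinus γ i, i) + 1 = γ (kMinus γ i, i) := by
          rw [gammaMinus_m]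
          omega
        have key := minus_main γ (gammaMinus γ i) i (kMinus γ i) h1 (by omega)
          (fun l hl => gammaMinus_blocks γ i l hl) hm (gammaMinus_p γ i hlt2) h3 h4
          (i - kMinus γ i).toNat (by omega)
        have e : kMinus γ i + 1 + ((i - kMinus γ i).toNat : ℤ) = i + 1 := by omega
        rw [e] at key
        rw [aCount_prefix, aCount_prefix]
        omega
    · exfalso
      have key := minus_zero γ i hall i.toNat (by omega)
      have e : (1 : ℤ) + (i.toNat : ℤ) = i + 1 := by omega
      rw [e] at key
      rw [aCount_prefix] at ha
      omega
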